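/- Let m ∈ ℕ, let E_1, …, E_m be Banach lattices, let G be a Banach space, and suppose that some E_j has the positive Schur property. Then every continuous m-linear operator A : E_1 × ⋯ × E_m → G is almost Dunford–Pettis. -/

import Mathlib

open Filter Topology

/-- A sequence in a Banach lattice is disjoint if `|x n| ⊓ |x k| = 0` for `n ≠ k`. -/
def DisjointSeq {E : Type*} [NormedAddCommGroup E] [Lattice E] [HasSolidNorm E]
    [IsOrderedAddMonoid E] (x : ℕ → E) : Prop :=
  ∀ n k, n ≠ k → |x n| ⊓ |x k| = 0

/-- A sequence is weakly null if `f (x n) → 0` for every continuous linear functional `f`. -/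
def WeaklyNull {E : Type*} [NormedAddCommGroup E] [NormedSpace ℝ E] (x : ℕ → E) : Prop :=
  ∀ f : E →L[ℝ] ℝ, Tendsto (fun n => f (x n)) atTop (𝓝 0)

/-- A Banach lattice has the positive Schur property if every weakly null sequence of
positive elements is norm null. -/
def PositiveSchurProperty (E : Type*) [NormedAddCommGroup E] [Lattice E] [HasSolidNorm E]
    [IsOrderedAddMonoid E] [NormedSpace ℝ E] : Prop :=
  ∀ x : ℕ → E, (∀ n, 0 ≤ x n) → WeaklyNull x → Tendsto (fun n => ‖x n‖) atTop (𝓝 0)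

section LatticeAux
variable {E : Type*} [NormedAddCommGroup E] [Lattice E] [HasSolidNorm E] [IsOrderedAddMonoid E]

/-- Subadditivity of the infimum against a sum of positives. -/
lemma addp_inf_le {a b u : E} (ha : 0 ≤ a) (hb : 0 ≤ b) (hu : 0 ≤ u) :
    (a + b) ⊓ u ≤ a ⊓ u + b ⊓ u := by
  have h1 : a ⊓ u + b ⊓ u = ((a + b) ⊓ (a + u)) ⊓ ((u + b) ⊓ (u + u)) := by
    rw [inf_add, add_inf, add_inf]
  rw [h1]
  refine le_inf (le_inf inf_le_left ?_) (le_inf ?_ ?_)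
  · exact inf_le_right.trans (le_add_of_nonneg_left ha)
  · exact inf_le_right.trans (le_add_of_nonneg_right hb)
  · exact inf_le_right.trans (le_add_of_nonneg_left hu)

/-- `(n • a) ⊓ u ≤ n • (a ⊓ u)` for positives. -/
lemma nsmul_inf_le {a u : E} (ha : 0 ≤ a) (hu : 0 ≤ u) (n : ℕ) :
    (n • a) ⊓ u ≤ n • (a ⊓ u) := by
  induction n with
  | zero => simp [inf_eq_right.2 hu]
  | succ n ih =>
      rw [succ_nsmul, succ_nsmul]
      calc (n • a + a) ⊓ u ≤ (n • a) ⊓ u + a ⊓ u :=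
            addp_inf_le (nsmul_nonneg ha n) ha hu
        _ ≤ n • (a ⊓ u) + a ⊓ u := add_le_add_left ih _

lemma nsmul_nonneg_cancel {z : E} (n : ℕ) (hn : 0 < n) (h : 0 ≤ n • z) : 0 ≤ z := by
  have hp : (0:E) ≤ z⁺ := posPart_nonneg z
  have hq : (0:E) ≤ z⁻ := negPart_nonneg z
  have hd : z⁺ ⊓ z⁻ = 0 := posPart_inf_negPart_eq_zero z
  have hdn : (n • z⁺) ⊓ (n • z⁻) = 0 := by
    have h2 : z⁺ ⊓ (n • z⁻) ≤ n • (z⁺ ⊓ z⁻) :=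
      calc z⁺ ⊓ (n • z⁻) = (n • z⁻) ⊓ z⁺ := inf_comm _ _
        _ ≤ n • (z⁻ ⊓ z⁺) := nsmul_inf_le hq hp n
        _ = n • (z⁺ ⊓ z⁻) := by rw [inf_comm]
    rw [hd, smul_zero] at h2
    refine le_antisymm ?_ (le_inf (nsmul_nonneg hp n) (nsmul_nonneg hq n))
    calc (n • z⁺) ⊓ (n • z⁻) ≤ n • (z⁺ ⊓ (n • z⁻)) :=
          nsmul_inf_le hp (nsmul_nonneg hq n) n
      _ ≤ n • (0:E) := nsmul_le_nsmul_right h2 n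
      _ = 0 := smul_zero n
  have hzz : n • z⁻ ≤ n • z⁺ := by
    have heq : n • z = n • z⁺ - n • z⁻ := by rw [← smul_sub, posPart_sub_negPart]
    rw [heq, sub_nonneg] at h
    exact h
  have hzero : n • z⁻ = 0 := by
    have h3 : n • z⁻ ≤ (n • z⁺) ⊓ (n • z⁻) := le_inf hzz le_rfl
    rw [hdn] at h3
    exact le_antisymm h3 (nsmul_nonneg hq n)
  have hle : z⁻ ≤ n • z⁻ := by
    obtain ⟨m, rfl⟩ := Nat.exists_eq_succ_of_ne_zero hn.ne'
    rw [succ_nsmul]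
    exact le_add_of_nonneg_left (nsmul_nonneg hq m)
  rw [hzero] at hle
  exact negPart_eq_zero.1 (le_antisymm hle hq)
end LatticeAux

section SmulAux
variable {E : Type*} [NormedAddCommGroup E] [Lattice E] [HasSolidNorm E] [IsOrderedAddMonoid E] [NormedSpace ℝ E]

lemma real_smul_nonneg {c : ℝ} (hc : 0 ≤ c) {x : E} (hx : 0 ≤ x) : 0 ≤ c • x := by
  have key : ∀ n : ℕ, 0 ≤ ((⌈c * (n+1)⌉₊ : ℝ) / (n+1)) • x := by
    intro n
    have hpos : (0:ℝ) < (n:ℝ) + 1 := by positivity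
    set y := ((1:ℝ)/((n:ℝ)+1)) • x with hy
    have hyn : 0 ≤ y := by
      refine nsmul_nonneg_cancel (n+1) (Nat.succ_pos n) ?_
      have : (n+1) • y = x := by
        rw [hy, ← Nat.cast_smul_eq_nsmul ℝ, smul_smul]
        push_cast
        rw [mul_one_div, div_self hpos.ne', one_smul]
      rw [this]; exact hx
    have : ((⌈c * (n+1)⌉₊ : ℝ) / (n+1)) • x = ⌈c * (n+1)⌉₊ • y := by
      rw [hy, ← Nat.cast_smul_eq_nsmul ℝ, smul_smul, div_eq_mul_one_div]
    rw [this]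
    exact nsmul_nonneg hyn _
  have htend : Tendsto (fun n : ℕ => ((⌈c * (n+1)⌉₊ : ℝ) / (n+1)) • x) atTop (𝓝 (c • x)) := by
    have h1 : Tendsto (fun n : ℕ => ((⌈c * (n+1)⌉₊ : ℝ) / (n+1))) atTop (𝓝 c) := by
      have hup : ∀ n : ℕ, ((⌈c * (n+1)⌉₊ : ℝ) / (n+1)) ≤ c + 1/(n+1) := by
        intro n
        have hpos : (0:ℝ) < (n:ℝ) + 1 := by positivity
        rw [div_le_iff₀ hpos, add_mul, one_div_mul_cancel hpos.ne']
        have := (Nat.ceil_lt_add_one (by positivity : 0 ≤ c * ((n:ℝ)+1)))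
        linarith
      have hlo : ∀ n : ℕ, c ≤ ((⌈c * (n+1)⌉₊ : ℝ) / (n+1)) := by
        intro n
        have hpos : (0:ℝ) < (n:ℝ) + 1 := by positivity
        rw [le_div_iff₀ hpos]
        exact Nat.le_ceil _
      have hub : Tendsto (fun n : ℕ => c + 1/((n:ℝ)+1)) atTop (𝓝 c) := by
        have := tendsto_one_div_add_atTop_nhds_zero_nat (𝕜 := ℝ)
        simpa using (tendsto_const_nhds (x := c)).add this
      exact tendsto_of_tendsto_of_tendsto_of_le_of_le tendsto_const_nhds hub hlo hup
    exact Tendsto.smul h1 tendsto_const_nhds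
  exact isClosed_nonneg.mem_of_tendsto htend (Eventually.of_forall key)

lemma real_smul_mono {c : ℝ} (hc : 0 ≤ c) {a b : E} (hab : a ≤ b) : c • a ≤ c • b := by
  have := real_smul_nonneg hc (sub_nonneg.2 hab)
  rwa [smul_sub, sub_nonneg] at this

lemma real_smul_inf {c : ℝ} (hc : 0 ≤ c) (a b : E) : c • (a ⊓ b) = (c • a) ⊓ (c • b) := by
  rcases eq_or_lt_of_le hc with h | h
  · simp [← h]
  refine le_antisymm (le_inf (real_smul_mono hc inf_le_left) (real_smul_mono hc inf_le_right)) ?_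
  have h2 : c⁻¹ • ((c • a) ⊓ (c • b)) ≤ a ⊓ b := by
    refine le_inf ?_ ?_
    · have := real_smul_mono (inv_nonneg.2 hc) (inf_le_left (a := c • a) (b := c • b))
      rwa [smul_smul, inv_mul_cancel₀ h.ne', one_smul] at this
    · have := real_smul_mono (inv_nonneg.2 hc) (inf_le_right (a := c • a) (b := c • b))
      rwa [smul_smul, inv_mul_cancel₀ h.ne', one_smul] at this
  have := real_smul_mono hc h2
  rwa [smul_smul, mul_inv_cancel₀ h.ne', one_smul] at this

lemma real_smul_sup {c : ℝ} (hc : 0 ≤ c) (a b : E) : c • (a ⊔ b) = (c • a) ⊔ (c • b) := by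
  rcases eq_or_lt_of_le hc with h | h
  · simp [← h]
  refine le_antisymm ?_ (sup_le (real_smul_mono hc le_sup_left) (real_smul_mono hc le_sup_right))
  have h2 : a ⊔ b ≤ c⁻¹ • ((c • a) ⊔ (c • b)) := by
    refine sup_le ?_ ?_
    · have := real_smul_mono (inv_nonneg.2 hc) (le_sup_left (a := c • a) (b := c • b))
      rwa [smul_smul, inv_mul_cancel₀ h.ne', one_smul] at this
    · have := real_smul_mono (inv_nonneg.2 hc) (le_sup_right (a := c • a) (b := c • b))
      rwa [smul_smul, inv_mul_cancel₀ h.ne', one_smul] at this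
  have := real_smul_mono hc h2
  rwa [smul_smul, mul_inv_cancel₀ h.ne', one_smul] at this

lemma posPart_real_smul {c : ℝ} (hc : 0 ≤ c) (a : E) : (c • a)⁺ = c • a⁺ := by
  rw [posPart_def, posPart_def, real_smul_sup hc, smul_zero]

lemma negPart_real_smul {c : ℝ} (hc : 0 ≤ c) (a : E) : (c • a)⁻ = c • a⁻ := by
  rw [← posPart_neg, ← posPart_neg, ← smul_neg, posPart_real_smul hc]

/-- Disjointness is preserved under nonneg scaling. -/
lemma disjoint_real_smul {a b : E} (ha : 0 ≤ a) (hb : 0 ≤ b) (hab : a ⊓ b = 0)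
    {s t : ℝ} (hs : 0 ≤ s) (ht : 0 ≤ t) : (s • a) ⊓ (t • b) = 0 := by
  set c := max s t
  have hc : 0 ≤ c := le_trans hs (le_max_left _ _)
  have h1 : s • a ≤ c • a := by
    have := real_smul_nonneg (sub_nonneg.2 (le_max_left s t)) ha
    rwa [sub_smul, sub_nonneg] at this
  have h2 : t • b ≤ c • b := by
    have := real_smul_nonneg (sub_nonneg.2 (le_max_right s t)) hb
    rwa [sub_smul, sub_nonneg] at this
  refine le_antisymm ?_ (le_inf (real_smul_nonneg hs ha) (real_smul_nonneg ht hb))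
  calc (s • a) ⊓ (t • b) ≤ (c • a) ⊓ (c • b) := inf_le_inf h1 h2
    _ = c • (a ⊓ b) := (real_smul_inf hc a b).symm
    _ = 0 := by rw [hab, smul_zero]

/-- `(∑ v) ⊓ u ≤ ∑ (v ⊓ u)` for positives. -/
lemma sum_inf_le {ι : Type*} (s : Finset ι) (v : ι → E) {u : E} (hu : 0 ≤ u)
    (hnn : ∀ i ∈ s, 0 ≤ v i) : (∑ i ∈ s, v i) ⊓ u ≤ ∑ i ∈ s, v i ⊓ u := by
  classical
  induction s using Finset.induction_on with
  | empty => simp [inf_eq_right.2 hu]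
  | @insert a s ha ih =>
      rw [Finset.sum_insert ha, Finset.sum_insert ha]
      have h1 : (v a + ∑ i ∈ s, v i) ⊓ u ≤ v a ⊓ u + (∑ i ∈ s, v i) ⊓ u :=
        addp_inf_le (hnn a (by simp)) (Finset.sum_nonneg fun i hi => hnn i (by simp [hi])) hu
      exact h1.trans (add_le_add_right (ih fun i hi => hnn i (by simp [hi])) _)

/-- A finite sum of pairwise disjoint positive elements below `z` is below `z`. -/
lemma sum_disjoint_le {ι : Type*} (s : Finset ι) (u : ι → E) {z : E} (hz : 0 ≤ z)
    (hnn : ∀ i ∈ s, 0 ≤ u i) (hle : ∀ i ∈ s, u i ≤ z)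
    (hdisj : ∀ i ∈ s, ∀ j ∈ s, i ≠ j → u i ⊓ u j = 0) :
    ∑ i ∈ s, u i ≤ z := by
  classical
  induction s using Finset.induction_on with
  | empty => simpa using hz
  | @insert a s ha ih =>
      rw [Finset.sum_insert ha]
      have hnn' : ∀ i ∈ s, 0 ≤ u i := fun i hi => hnn i (by simp [hi])
      have hS : 0 ≤ ∑ i ∈ s, u i := Finset.sum_nonneg hnn'
      have hua : 0 ≤ u a := hnn a (by simp)
      have hinf : u a ⊓ ∑ i ∈ s, u i = 0 := by
        refine le_antisymm ?_ (le_inf hua hS)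
        rw [inf_comm]
        refine le_trans (sum_inf_le s u hua hnn') ?_
        rw [show (0:E) = ∑ i ∈ s, (0:E) by simp]
        refine Finset.sum_le_sum fun i hi => ?_
        rw [hdisj i (by simp [hi]) a (by simp) (by rintro rfl; exact ha hi)]
      have hsum : u a + ∑ i ∈ s, u i = u a ⊔ ∑ i ∈ s, u i := by
        have := inf_add_sup (u a) (∑ i ∈ s, u i)
        rw [hinf, zero_add] at this
        exact this.symm
      rw [hsum]
      refine sup_le (hle a (by simp)) (ih hnn' (fun i hi => hle i (by simp [hi]))
        (fun i hi j hj hij => hdisj i (by simp [hi]) j (by simp [hj]) hij))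

end SmulAux

/-- An additive, positively homogeneous, nonnegative function on the positive cone. -/
structure ConeFun (E : Type*) [NormedAddCommGroup E] [Lattice E] [HasSolidNorm E] [IsOrderedAddMonoid E] [NormedSpace ℝ E] where
  toFun : E → ℝ
  nonneg' : ∀ ⦃x : E⦄, 0 ≤ x → 0 ≤ toFun x
  add' : ∀ ⦃x y : E⦄, 0 ≤ x → 0 ≤ y → toFun (x + y) = toFun x + toFun y
  smul' : ∀ (c : ℝ) ⦃x : E⦄, 0 ≤ c → 0 ≤ x → toFun (c • x) = c * toFun x

namespace ConeFun
variable {E : Type*} [NormedAddCommGroup E] [Lattice E] [HasSolidNorm E] [IsOrderedAddMonoid E] [NormedSpace ℝ E]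

instance : CoeFun (ConeFun E) (fun _ => E → ℝ) := ⟨ConeFun.toFun⟩

lemma map_zero (h : ConeFun E) : h 0 = 0 := by
  have := h.add' (le_refl (0:E)) (le_refl (0:E))
  simp only [add_zero] at this
  linarith

lemma mono (h : ConeFun E) {a b : E} (ha : 0 ≤ a) (hab : a ≤ b) : h a ≤ h b := by
  have h1 := h.add' ha (sub_nonneg.2 hab)
  rw [add_sub_cancel] at h1
  have h2 := h.nonneg' (sub_nonneg.2 hab)
  linarith

lemma map_sum (h : ConeFun E) {ι : Type*} (s : Finset ι) (v : ι → E)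
    (hv : ∀ i ∈ s, 0 ≤ v i) : h (∑ i ∈ s, v i) = ∑ i ∈ s, h (v i) := by
  classical
  induction s using Finset.induction_on with
  | empty => simpa using h.map_zero
  | @insert a s ha ih =>
      rw [Finset.sum_insert ha, Finset.sum_insert ha,
        h.add' (hv a (by simp)) (Finset.sum_nonneg fun i hi => hv i (by simp [hi])),
        ih fun i hi => hv i (by simp [hi])]

lemma restrict_bdd (h : ConeFun E) {y z : E} (hy : 0 ≤ y) (hz : 0 ≤ z) :
    BddAbove (Set.range fun t : {c : ℝ // 0 ≤ c} => h (z ⊓ (t : ℝ) • y)) := by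
  refine ⟨h z, ?_⟩
  rintro r ⟨t, rfl⟩
  exact h.mono (le_inf hz (real_smul_nonneg t.2 hy)) inf_le_left

/-- The "component along `y`" of a cone functional. -/
noncomputable def restrict (h : ConeFun E) (y : E) (hy : 0 ≤ y) : ConeFun E where
  toFun z := ⨆ t : {c : ℝ // 0 ≤ c}, h (z ⊓ (t : ℝ) • y)
  nonneg' := by
    intro z hz
    have h0 : h (z ⊓ ((⟨0, le_rfl⟩ : {c : ℝ // 0 ≤ c}) : ℝ) • y) = 0 := by
      show h (z ⊓ (0:ℝ) • y) = 0
      rw [zero_smul, inf_eq_right.2 hz, h.map_zero]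
    exact le_of_eq h0.symm |>.trans (le_ciSup (h.restrict_bdd hy hz) ⟨0, le_rfl⟩)
  add' := by
    intro z w hz hw
    have hzw : (0:E) ≤ z + w := add_nonneg hz hw
    refine le_antisymm (ciSup_le fun t => ?_) ?_
    · have hty : (0:E) ≤ (t:ℝ) • y := real_smul_nonneg t.2 hy
      calc h ((z + w) ⊓ (t:ℝ) • y) ≤ h (z ⊓ (t:ℝ) • y + w ⊓ (t:ℝ) • y) :=
            h.mono (le_inf hzw hty) (addp_inf_le hz hw hty)
        _ = h (z ⊓ (t:ℝ) • y) + h (w ⊓ (t:ℝ) • y) :=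
            h.add' (le_inf hz hty) (le_inf hw hty)
        _ ≤ _ := add_le_add (le_ciSup (h.restrict_bdd hy hz) t)
            (le_ciSup (h.restrict_bdd hy hw) t)
    · have key : ∀ s t : {c : ℝ // 0 ≤ c}, h (z ⊓ (s:ℝ) • y) + h (w ⊓ (t:ℝ) • y) ≤
          ⨆ t : {c : ℝ // 0 ≤ c}, h ((z + w) ⊓ (t : ℝ) • y) := by
        intro s t
        have hsy : (0:E) ≤ (s:ℝ) • y := real_smul_nonneg s.2 hy
        have hty : (0:E) ≤ (t:ℝ) • y := real_smul_nonneg t.2 hy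
        calc h (z ⊓ (s:ℝ) • y) + h (w ⊓ (t:ℝ) • y) = h (z ⊓ (s:ℝ) • y + w ⊓ (t:ℝ) • y) :=
              (h.add' (le_inf hz hsy) (le_inf hw hty)).symm
          _ ≤ h ((z + w) ⊓ (((s:ℝ) + (t:ℝ))) • y) := by
              refine h.mono (add_nonneg (le_inf hz hsy) (le_inf hw hty)) ?_
              refine le_inf (add_le_add inf_le_left inf_le_left) ?_
              rw [add_smul]
              exact add_le_add inf_le_right inf_le_right
          _ ≤ _ := le_ciSup (h.restrict_bdd hy hzw) ⟨(s:ℝ) + (t:ℝ), add_nonneg s.2 t.2⟩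
      have hA : (⨆ t : {c : ℝ // 0 ≤ c}, h (z ⊓ (t : ℝ) • y)) ≤
          (⨆ t : {c : ℝ // 0 ≤ c}, h ((z + w) ⊓ (t : ℝ) • y)) -
            ⨆ t : {c : ℝ // 0 ≤ c}, h (w ⊓ (t : ℝ) • y) := by
        refine ciSup_le fun s => le_sub_iff_add_le.2 ?_
        rw [add_comm]
        refine le_sub_iff_add_le.1 (ciSup_le fun t => le_sub_iff_add_le.2 ?_)
        rw [add_comm]
        exact key s t
      linarith [hA]
  smul' := by
    have key : ∀ c : ℝ, 0 < c → ∀ z : E, 0 ≤ z →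
        (⨆ t : {r : ℝ // 0 ≤ r}, h ((c • z) ⊓ (t : ℝ) • y)) ≤
          c * ⨆ t : {r : ℝ // 0 ≤ r}, h (z ⊓ (t : ℝ) • y) := by
      intro c hc z hz
      refine ciSup_le fun t => ?_
      have h1 : (c • z) ⊓ (t:ℝ) • y = c • (z ⊓ ((t:ℝ)/c) • y) := by
        rw [real_smul_inf hc.le, smul_smul, show c * ((t:ℝ)/c) = (t:ℝ) by field_simp]
      have htc : (0:ℝ) ≤ (t:ℝ)/c := div_nonneg t.2 hc.le
      rw [h1, h.smul' c hc.le (le_inf hz (real_smul_nonneg htc hy))]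
      exact mul_le_mul_of_nonneg_left
        (le_ciSup (h.restrict_bdd hy hz) ⟨(t:ℝ)/c, htc⟩) hc.le
    intro c z hc hz
    rcases eq_or_lt_of_le hc with rfl | hcpos
    · have h0 : ∀ t : {r : ℝ // 0 ≤ r}, h (((0:ℝ) • z) ⊓ (t : ℝ) • y) = 0 := by
        intro t
        rw [zero_smul, inf_eq_left.2 (real_smul_nonneg t.2 hy), h.map_zero]
      refine le_antisymm (ciSup_le fun t => le_of_eq (h0 t)) ?_ |>.trans (by ring_nf)
      exact le_of_eq (h0 ⟨0, le_rfl⟩).symm |>.trans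
        (le_ciSup (h.restrict_bdd hy (by rw [zero_smul] : (0:E) ≤ (0:ℝ) • z)) ⟨0, le_rfl⟩)
    · refine le_antisymm (key c hcpos z hz) ?_
      have h2 := key c⁻¹ (inv_pos.2 hcpos) (c • z) (real_smul_nonneg hc hz)
      rw [smul_smul, inv_mul_cancel₀ hcpos.ne', one_smul] at h2
      calc c * (⨆ t : {r : ℝ // 0 ≤ r}, h (z ⊓ (t : ℝ) • y)) ≤
            c * (c⁻¹ * ⨆ t : {r : ℝ // 0 ≤ r}, h ((c • z) ⊓ (t : ℝ) • y)) :=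
              mul_le_mul_of_nonneg_left h2 hc
        _ = _ := by rw [← mul_assoc, mul_inv_cancel₀ hcpos.ne', one_mul]

lemma restrict_apply (h : ConeFun E) (y : E) (hy : 0 ≤ y) (z : E) :
    h.restrict y hy z = ⨆ t : {c : ℝ // 0 ≤ c}, h (z ⊓ (t : ℝ) • y) := rfl

lemma restrict_le_self (h : ConeFun E) {y z : E} (hy : 0 ≤ y) (hz : 0 ≤ z) :
    h.restrict y hy z ≤ h z := by
  rw [restrict_apply]
  exact ciSup_le fun t => h.mono (le_inf hz (real_smul_nonneg t.2 hy)) inf_le_left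

lemma restrict_apply_of_le (h : ConeFun E) {y z : E} (hy : 0 ≤ y) (hz : 0 ≤ z)
    {t₀ : ℝ} (ht₀ : 0 ≤ t₀) (hzy : z ≤ t₀ • y) : h.restrict y hy z = h z := by
  refine le_antisymm (h.restrict_le_self hy hz) ?_
  rw [restrict_apply]
  have : h z = h (z ⊓ ((⟨t₀, ht₀⟩ : {c : ℝ // 0 ≤ c}) : ℝ) • y) := by
    show h z = h (z ⊓ t₀ • y)
    rw [inf_eq_left.2 hzy]
  exact le_of_eq this |>.trans (le_ciSup (h.restrict_bdd hy hz) ⟨t₀, ht₀⟩)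

lemma restrict_eq_zero (h : ConeFun E) {y z : E} (hy : 0 ≤ y) (hz : 0 ≤ z)
    (hzy : z ⊓ y = 0) : h.restrict y hy z = 0 := by
  refine le_antisymm ?_ ((h.restrict y hy).nonneg' hz)
  rw [restrict_apply]
  refine ciSup_le fun t => ?_
  have : z ⊓ (t:ℝ) • y = 0 := by
    have := disjoint_real_smul hz hy hzy zero_le_one t.2
    rwa [one_smul] at this
  rw [this, h.map_zero]

lemma restrict_self_apply (h : ConeFun E) {y : E} (hy : 0 ≤ y) :
    h.restrict y hy y = h y :=
  h.restrict_apply_of_le hy hy zero_le_one (by rw [one_smul])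

/-- Partial sums of components along a disjoint sequence are dominated by `h`. -/
lemma sum_restrict_le (h : ConeFun E) (ys : ℕ → E) (hys : ∀ k, 0 ≤ ys k)
    (hd : ∀ k l, k ≠ l → ys k ⊓ ys l = 0) {z : E} (hz : 0 ≤ z) (N : ℕ) :
    ∑ k ∈ Finset.range N, h.restrict (ys k) (hys k) z ≤ h z := by
  refine le_of_forall_pos_le_add fun ε hε => ?_
  rcases Nat.eq_zero_or_pos N with rfl | hN
  · simpa using le_add_of_nonneg_of_le (h.nonneg' hz) (le_of_lt hε) |>.trans (by linarith [h.nonneg' hz])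
  have hchoice : ∀ k : ℕ, ∃ t : {c : ℝ // 0 ≤ c},
      h.restrict (ys k) (hys k) z - ε / N < h (z ⊓ (t:ℝ) • ys k) := by
    intro k
    have hlt : h.restrict (ys k) (hys k) z - ε / N < h.restrict (ys k) (hys k) z := by
      have : (0:ℝ) < ε / N := by positivity
      linarith
    rw [restrict_apply] at hlt
    exact exists_lt_of_lt_ciSup hlt
  choose t ht using hchoice
  have hterm : ∀ k, 0 ≤ z ⊓ ((t k : ℝ)) • ys k :=
    fun k => le_inf hz (real_smul_nonneg (t k).2 (hys k))
  have hsum : ∑ k ∈ Finset.range N, h (z ⊓ ((t k : ℝ)) • ys k) ≤ h z := by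
    rw [← h.map_sum _ _ fun k _ => hterm k]
    refine h.mono (Finset.sum_nonneg fun k _ => hterm k) ?_
    refine sum_disjoint_le _ _ hz (fun k _ => hterm k) (fun k _ => inf_le_left) ?_
    intro k _ l _ hkl
    have hdisj : ((t k : ℝ) • ys k) ⊓ ((t l : ℝ) • ys l) = 0 :=
      disjoint_real_smul (hys k) (hys l) (hd k l hkl) (t k).2 (t l).2
    refine le_antisymm ?_ (le_inf (hterm k) (hterm l))
    calc (z ⊓ (t k : ℝ) • ys k) ⊓ (z ⊓ (t l : ℝ) • ys l) ≤
        ((t k : ℝ) • ys k) ⊓ ((t l : ℝ) • ys l) := inf_le_inf inf_le_right inf_le_right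
      _ = 0 := hdisj
  calc ∑ k ∈ Finset.range N, h.restrict (ys k) (hys k) z ≤
      ∑ k ∈ Finset.range N, (h (z ⊓ ((t k : ℝ)) • ys k) + ε / N) :=
        Finset.sum_le_sum fun k _ => by linarith [ht k]
    _ = (∑ k ∈ Finset.range N, h (z ⊓ ((t k : ℝ)) • ys k)) + ε := by
        rw [Finset.sum_add_distrib, Finset.sum_const, Finset.card_range, nsmul_eq_mul]
        field_simp
    _ ≤ h z + ε := by linarith [hsum]


/-- Pointwise sum of a dominated sequence of cone functionals. -/
noncomputable def tsumCone (ψ : ℕ → ConeFun E) (g : ConeFun E)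
    (hle : ∀ ⦃z : E⦄, 0 ≤ z → ∀ N, ∑ k ∈ Finset.range N, ψ k z ≤ g z) : ConeFun E where
  toFun z := ∑' k, ψ k z
  nonneg' := fun z hz => tsum_nonneg fun k => (ψ k).nonneg' hz
  add' := by
    intro z w hz hw
    have hsummable : ∀ ⦃v : E⦄, 0 ≤ v → Summable fun k => ψ k v := fun v hv =>
      summable_of_sum_range_le (fun k => (ψ k).nonneg' hv) (hle hv)
    calc (∑' k, ψ k (z + w)) = ∑' k, (ψ k z + ψ k w) :=
          tsum_congr fun k => (ψ k).add' hz hw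
      _ = (∑' k, ψ k z) + ∑' k, ψ k w := Summable.tsum_add (hsummable hz) (hsummable hw)
  smul' := by
    intro c z hc hz
    calc (∑' k, ψ k (c • z)) = ∑' k, c * ψ k z := tsum_congr fun k => (ψ k).smul' c hc hz
      _ = c * ∑' k, ψ k z := tsum_mul_left

lemma tsumCone_le (ψ : ℕ → ConeFun E) (g : ConeFun E)
    (hle : ∀ ⦃z : E⦄, 0 ≤ z → ∀ N, ∑ k ∈ Finset.range N, ψ k z ≤ g z)
    {z : E} (hz : 0 ≤ z) : tsumCone ψ g hle z ≤ g z :=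
  Real.tsum_le_of_sum_range_le (fun k => (ψ k).nonneg' hz) (hle hz)

lemma tsumCone_eq_single (ψ : ℕ → ConeFun E) (g : ConeFun E)
    (hle : ∀ ⦃z : E⦄, 0 ≤ z → ∀ N, ∑ k ∈ Finset.range N, ψ k z ≤ g z)
    (z : E) (k₀ : ℕ) (hz : ∀ k, k ≠ k₀ → ψ k z = 0) :
    tsumCone ψ g hle z = ψ k₀ z :=
  tsum_eq_single k₀ hz

/-- Extension of a dominated cone functional to a continuous linear functional. -/
noncomputable def toCLM (h : ConeFun E) (C : ℝ) (hC0 : 0 ≤ C)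
    (hC : ∀ ⦃z : E⦄, 0 ≤ z → h z ≤ C * ‖z‖) : E →L[ℝ] ℝ := by
  refine LinearMap.mkContinuous
    { toFun := fun z => h z⁺ - h z⁻
      map_add' := ?_
      map_smul' := ?_ } (2 * C) ?_
  · intro a b
    have key : (a + b)⁺ + (a⁻ + b⁻) = (a + b)⁻ + (a⁺ + b⁺) := by
      have h1 := posPart_sub_negPart (a + b)
      have h2 := posPart_sub_negPart a
      have h3 := posPart_sub_negPart b
      have : (a + b)⁺ - (a + b)⁻ = a⁺ - a⁻ + (b⁺ - b⁻) := by rw [h1, h2, h3]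
      linear_combination (norm := abel) this
    have e1 : h ((a + b)⁺ + (a⁻ + b⁻)) = h (a + b)⁺ + (h a⁻ + h b⁻) := by
      rw [h.add' (posPart_nonneg _) (add_nonneg (negPart_nonneg _) (negPart_nonneg _)),
        h.add' (negPart_nonneg _) (negPart_nonneg _)]
    have e2 : h ((a + b)⁻ + (a⁺ + b⁺)) = h (a + b)⁻ + (h a⁺ + h b⁺) := by
      rw [h.add' (negPart_nonneg _) (add_nonneg (posPart_nonneg _) (posPart_nonneg _)),
        h.add' (posPart_nonneg _) (posPart_nonneg _)]
    rw [key] at e1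
    rw [e2] at e1
    linarith
  · intro c z
    simp only [RingHom.id_apply, smul_eq_mul]
    rcases le_or_gt 0 c with hc | hc
    · rw [posPart_real_smul hc, negPart_real_smul hc,
        h.smul' c hc (posPart_nonneg _), h.smul' c hc (negPart_nonneg _)]
      ring
    · have hc' : (0:ℝ) ≤ -c := by linarith
      have e1 : (c • z)⁺ = (-c) • z⁻ := by
        rw [show c • z = (-c) • (-z) by rw [neg_smul, smul_neg, neg_neg],
          posPart_real_smul hc', posPart_neg]
      have e2 : (c • z)⁻ = (-c) • z⁺ := by
        rw [show c • z = (-c) • (-z) by rw [neg_smul, smul_neg, neg_neg],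
          negPart_real_smul hc', negPart_neg]
      rw [e1, e2, h.smul' _ hc' (negPart_nonneg _), h.smul' _ hc' (posPart_nonneg _)]
      ring
  · intro z
    simp only [LinearMap.coe_mk, AddHom.coe_mk]
    have h1 : 0 ≤ h z⁺ := h.nonneg' (posPart_nonneg _)
    have h2 : 0 ≤ h z⁻ := h.nonneg' (negPart_nonneg _)
    have habs : ∀ w : E, h w⁺ ≤ C * ‖w‖ ∧ h w⁻ ≤ C * ‖w‖ := by
      intro w
      have hp : w⁺ ≤ |w| := by
        rw [← posPart_add_negPart w]
        exact le_add_of_nonneg_right (negPart_nonneg w)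
      have hn : w⁻ ≤ |w| := by
        rw [← posPart_add_negPart w]
        exact le_add_of_nonneg_left (posPart_nonneg w)
      have hknorm : ∀ v : E, 0 ≤ v → v ≤ |w| → h v ≤ C * ‖w‖ := by
        intro v hv hvw
        refine (hC hv).trans (mul_le_mul_of_nonneg_left ?_ hC0)
        rw [← norm_abs_eq_norm w]
        refine norm_le_norm_of_abs_le_abs ?_
        rw [abs_of_nonneg hv, abs_abs]
        exact hvw
      exact ⟨hknorm _ (posPart_nonneg w) hp, hknorm _ (negPart_nonneg w) hn⟩
    have h3 := (habs z).1
    have h4 := (habs z).2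
    rw [Real.norm_eq_abs, abs_le]
    constructor <;> nlinarith

lemma toCLM_apply (h : ConeFun E) (C : ℝ) (hC0 : 0 ≤ C)
    (hC : ∀ ⦃z : E⦄, 0 ≤ z → h z ≤ C * ‖z‖) (z : E) :
    h.toCLM C hC0 hC z = h z⁺ - h z⁻ := rfl

lemma toCLM_apply_of_nonneg (h : ConeFun E) (C : ℝ) (hC0 : 0 ≤ C)
    (hC : ∀ ⦃z : E⦄, 0 ≤ z → h z ≤ C * ‖z‖) {z : E} (hz : 0 ≤ z) :
    h.toCLM C hC0 hC z = h z := by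
  rw [toCLM_apply, posPart_eq_self.2 hz, negPart_eq_zero.2 hz, h.map_zero, sub_zero]

end ConeFun

section PosPartCone
variable {E : Type*} [NormedAddCommGroup E] [Lattice E] [HasSolidNorm E] [IsOrderedAddMonoid E] [NormedSpace ℝ E]

lemma posPartCone_bdd (f : E →L[ℝ] ℝ) {z : E} (hz : 0 ≤ z) :
    BddAbove (Set.range fun u : {u : E // 0 ≤ u ∧ u ≤ z} => f u) := by
  refine ⟨‖f‖ * ‖z‖, ?_⟩
  rintro r ⟨u, rfl⟩
  have h1 : ‖(u:E)‖ ≤ ‖z‖ := by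
    refine norm_le_norm_of_abs_le_abs ?_
    rw [abs_of_nonneg u.2.1, abs_of_nonneg hz]
    exact u.2.2
  calc f u ≤ ‖f (u:E)‖ := le_abs_self _
    _ ≤ ‖f‖ * ‖(u:E)‖ := f.le_opNorm _
    _ ≤ ‖f‖ * ‖z‖ := mul_le_mul_of_nonneg_left h1 (norm_nonneg f)

/-- The Riesz–Kantorovich positive part of a continuous linear functional,
as a cone functional. -/
noncomputable def posPartCone (f : E →L[ℝ] ℝ) : ConeFun E where
  toFun z := ⨆ u : {u : E // 0 ≤ u ∧ u ≤ z}, f u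
  nonneg' := by
    intro z hz
    have h0 : f ((⟨0, le_rfl, hz⟩ : {u : E // 0 ≤ u ∧ u ≤ z}) : E) = 0 := map_zero f
    exact le_of_eq h0.symm |>.trans (le_ciSup (posPartCone_bdd f hz) ⟨0, le_rfl, hz⟩)
  add' := by
    intro z w hz hw
    have hzw : (0:E) ≤ z + w := add_nonneg hz hw
    haveI : Nonempty {u : E // 0 ≤ u ∧ u ≤ z + w} := ⟨⟨0, le_rfl, hzw⟩⟩
    haveI : Nonempty {u : E // 0 ≤ u ∧ u ≤ z} := ⟨⟨0, le_rfl, hz⟩⟩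
    haveI : Nonempty {u : E // 0 ≤ u ∧ u ≤ w} := ⟨⟨0, le_rfl, hw⟩⟩
    refine le_antisymm (ciSup_le fun u => ?_) ?_
    · have hu1 : (0:E) ≤ (u:E) ⊓ z := le_inf u.2.1 hz
      have hu1' : (u:E) ⊓ z ≤ z := inf_le_right
      have hu2 : (0:E) ≤ (u:E) - (u:E) ⊓ z := sub_nonneg.2 inf_le_left
      have hu2' : (u:E) - (u:E) ⊓ z ≤ w := by
        refine sub_le_iff_le_add.2 ?_
        rw [add_comm w]
        calc (u:E) ≤ ((u:E) + w) ⊓ (z + w) := le_inf (le_add_of_nonneg_right hw) u.2.2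
          _ = (u:E) ⊓ z + w := by rw [inf_add]
      have hfu : f u = f ((u:E) ⊓ z) + f ((u:E) - (u:E) ⊓ z) := by
        rw [← map_add]
        congr 1
        abel
      rw [hfu]
      exact add_le_add (le_ciSup (posPartCone_bdd f hz) ⟨(u:E) ⊓ z, hu1, hu1'⟩)
        (le_ciSup (posPartCone_bdd f hw) ⟨(u:E) - (u:E) ⊓ z, hu2, hu2'⟩)
    · have key : ∀ (u : {u : E // 0 ≤ u ∧ u ≤ z}) (v : {u : E // 0 ≤ u ∧ u ≤ w}),
          f u + f v ≤ ⨆ u : {u : E // 0 ≤ u ∧ u ≤ z + w}, f u := by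
        intro u v
        have h1 : (0:E) ≤ (u:E) + (v:E) := add_nonneg u.2.1 v.2.1
        have h2 : (u:E) + (v:E) ≤ z + w := add_le_add u.2.2 v.2.2
        calc f u + f v = f ((u:E) + (v:E)) := (map_add f _ _).symm
          _ ≤ _ := le_ciSup (posPartCone_bdd f hzw) ⟨(u:E) + (v:E), h1, h2⟩
      have hA : (⨆ u : {u : E // 0 ≤ u ∧ u ≤ z}, f u) ≤
          (⨆ u : {u : E // 0 ≤ u ∧ u ≤ z + w}, f u) - ⨆ u : {u : E // 0 ≤ u ∧ u ≤ w}, f u := by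
        have hne : Nonempty {u : E // 0 ≤ u ∧ u ≤ z} := ⟨⟨0, le_rfl, hz⟩⟩
        have hnew : Nonempty {u : E // 0 ≤ u ∧ u ≤ w} := ⟨⟨0, le_rfl, hw⟩⟩
        refine ciSup_le fun u => le_sub_iff_add_le.2 ?_
        rw [add_comm]
        refine le_sub_iff_add_le.1 (ciSup_le fun v => le_sub_iff_add_le.2 ?_)
        rw [add_comm]
        exact key u v
      linarith [hA]
  smul' := by
    have key : ∀ c : ℝ, 0 < c → ∀ z : E, 0 ≤ z →
        (⨆ u : {u : E // 0 ≤ u ∧ u ≤ c • z}, f u) ≤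
          c * ⨆ u : {u : E // 0 ≤ u ∧ u ≤ z}, f u := by
      intro c hc z hz
      have hcz : (0:E) ≤ c • z := real_smul_nonneg hc.le hz
      haveI : Nonempty {u : E // 0 ≤ u ∧ u ≤ c • z} := ⟨⟨0, le_rfl, hcz⟩⟩
      refine ciSup_le fun u => ?_
      have h1 : (0:E) ≤ c⁻¹ • (u:E) := real_smul_nonneg (inv_nonneg.2 hc.le) u.2.1
      have h2 : c⁻¹ • (u:E) ≤ z := by
        have := real_smul_mono (inv_nonneg.2 hc.le) u.2.2
        rwa [smul_smul, inv_mul_cancel₀ hc.ne', one_smul] at this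
      have hfu : f (u:E) = c * f (c⁻¹ • (u:E)) := by
        have h4 := f.map_smul c (c⁻¹ • (u:E))
        rw [smul_smul, mul_inv_cancel₀ hc.ne', one_smul, smul_eq_mul] at h4
        exact h4
      rw [hfu]
      exact mul_le_mul_of_nonneg_left
        (le_ciSup (posPartCone_bdd f hz) ⟨c⁻¹ • (u:E), h1, h2⟩) hc.le
    intro c z hc hz
    rcases eq_or_lt_of_le hc with rfl | hcpos
    · haveI : Nonempty {u : E // 0 ≤ u ∧ u ≤ (0:ℝ) • z} := ⟨⟨0, le_rfl, by rw [zero_smul]⟩⟩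
      have hz0 : ∀ u : {u : E // 0 ≤ u ∧ u ≤ (0:ℝ) • z}, f u = 0 := by
        intro u
        have : (u:E) = 0 := le_antisymm (by simpa using u.2.2) u.2.1
        rw [this, map_zero]
      refine le_antisymm (ciSup_le fun u => le_of_eq (hz0 u)) ?_ |>.trans (by ring_nf)
      have hmem : (0:E) ≤ (0:ℝ) • z := by rw [zero_smul]
      exact le_of_eq (hz0 ⟨0, le_rfl, hmem⟩).symm |>.trans
        (le_ciSup (posPartCone_bdd f hmem) ⟨0, le_rfl, hmem⟩)
    · refine le_antisymm (key c hcpos z hz) ?_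
      have h2 := key c⁻¹ (inv_pos.2 hcpos) (c • z) (real_smul_nonneg hc hz)
      rw [smul_smul, inv_mul_cancel₀ hcpos.ne', one_smul] at h2
      calc c * (⨆ u : {u : E // 0 ≤ u ∧ u ≤ z}, f u) ≤
            c * (c⁻¹ * ⨆ u : {u : E // 0 ≤ u ∧ u ≤ c • z}, f u) :=
              mul_le_mul_of_nonneg_left h2 hc
        _ = _ := by rw [← mul_assoc, mul_inv_cancel₀ hcpos.ne', one_mul]

lemma le_posPartCone (f : E →L[ℝ] ℝ) {z : E} (hz : 0 ≤ z) : f z ≤ posPartCone f z :=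
  le_ciSup (posPartCone_bdd f hz) ⟨z, hz, le_rfl⟩

lemma posPartCone_le_norm (f : E →L[ℝ] ℝ) {z : E} (hz : 0 ≤ z) :
    posPartCone f z ≤ ‖f‖ * ‖z‖ := by
  have hne : Nonempty {u : E // 0 ≤ u ∧ u ≤ z} := ⟨⟨0, le_rfl, hz⟩⟩
  refine ciSup_le fun u => ?_
  have h1 : ‖(u:E)‖ ≤ ‖z‖ := by
    refine norm_le_norm_of_abs_le_abs ?_
    rw [abs_of_nonneg u.2.1, abs_of_nonneg hz]
    exact u.2.2
  calc f u ≤ ‖f (u:E)‖ := le_abs_self _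
    _ ≤ ‖f‖ * ‖(u:E)‖ := f.le_opNorm _
    _ ≤ ‖f‖ * ‖z‖ := mul_le_mul_of_nonneg_left h1 (norm_nonneg f)

end PosPartCone

section Core
variable {E : Type*} [NormedAddCommGroup E] [Lattice E] [HasSolidNorm E] [IsOrderedAddMonoid E] [NormedSpace ℝ E]

lemma coreTendsto (g : ConeFun E) (C : ℝ) (hC0 : 0 ≤ C)
    (hC : ∀ ⦃z : E⦄, 0 ≤ z → g z ≤ C * ‖z‖)
    (x : ℕ → E) (hdisj : DisjointSeq x) (hweak : WeaklyNull x) :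
    Tendsto (fun n => g |x n|) atTop (𝓝 0) := by
  by_contra hcon
  obtain ⟨ε, hε, hfreq⟩ : ∃ ε > 0, ∃ᶠ n in atTop, ε ≤ g |x n| := by
    rw [Metric.tendsto_atTop] at hcon
    push_neg at hcon
    obtain ⟨ε, hε, hN⟩ := hcon
    refine ⟨ε, hε, ?_⟩
    rw [frequently_atTop]
    intro N
    obtain ⟨n, hn, hdist⟩ := hN N
    refine ⟨n, hn, ?_⟩
    rw [Real.dist_eq, sub_zero, abs_of_nonneg (g.nonneg' (abs_nonneg _))] at hdist
    exact hdist
  obtain ⟨φ, hφ, hφε⟩ := extraction_of_frequently_atTop hfreq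
  set y : ℕ → E := fun k => |x (φ k)| with hydef
  have hy : ∀ k, 0 ≤ y k := fun k => abs_nonneg _
  have hyd : ∀ k l, k ≠ l → y k ⊓ y l = 0 := fun k l hkl =>
    hdisj _ _ fun h => hkl (hφ.injective h)
  set h : ℕ → ConeFun E := fun k => g.restrict (y k) (hy k) with hhdef
  set α : ℕ → ConeFun E := fun k => (h k).restrict (x (φ k))⁺ (posPart_nonneg _) with hαdef
  set β : ℕ → ConeFun E := fun k => (h k).restrict (x (φ k))⁻ (negPart_nonneg _) with hβdef
  have hsumh : ∀ ⦃z : E⦄, 0 ≤ z → ∀ N, ∑ k ∈ Finset.range N, h k z ≤ g z :=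
    fun z hz N => g.sum_restrict_le y hy hyd hz N
  have hαle : ∀ ⦃z : E⦄, 0 ≤ z → ∀ N, ∑ k ∈ Finset.range N, α k z ≤ g z := by
    intro z hz N
    refine le_trans (Finset.sum_le_sum fun k _ => ?_) (hsumh hz N)
    exact (h k).restrict_le_self (posPart_nonneg _) hz
  have hβle : ∀ ⦃z : E⦄, 0 ≤ z → ∀ N, ∑ k ∈ Finset.range N, β k z ≤ g z := by
    intro z hz N
    refine le_trans (Finset.sum_le_sum fun k _ => ?_) (hsumh hz N)
    exact (h k).restrict_le_self (negPart_nonneg _) hz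
  set Aφ := ConeFun.tsumCone α g hαle with hAdef
  set Bφ := ConeFun.tsumCone β g hβle with hBdef
  have hAC : ∀ ⦃z : E⦄, 0 ≤ z → Aφ z ≤ C * ‖z‖ :=
    fun z hz => (ConeFun.tsumCone_le α g hαle hz).trans (hC hz)
  have hBC : ∀ ⦃z : E⦄, 0 ≤ z → Bφ z ≤ C * ‖z‖ :=
    fun z hz => (ConeFun.tsumCone_le β g hβle hz).trans (hC hz)
  set G : E →L[ℝ] ℝ := Aφ.toCLM C hC0 hAC - Bφ.toCLM C hC0 hBC with hGdef
  -- vanishing of foreign components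
  have hforeign : ∀ (k l : ℕ), l ≠ k → ∀ ⦃w : E⦄, 0 ≤ w → w ≤ y k →
      α l w = 0 ∧ β l w = 0 := by
    intro k l hlk w hw hwyk
    have hhl : h l (y k) = 0 := g.restrict_eq_zero (hy l) (hy k) (hyd k l (Ne.symm hlk))
    have hhlw : h l w = 0 :=
      le_antisymm (le_of_le_of_eq ((h l).mono hw hwyk) hhl) ((h l).nonneg' hw)
    constructor
    · refine le_antisymm ?_ ((α l).nonneg' hw)
      exact le_of_le_of_eq ((h l).restrict_le_self (posPart_nonneg _) hw) hhlw
    · refine le_antisymm ?_ ((β l).nonneg' hw)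
      exact le_of_le_of_eq ((h l).restrict_le_self (negPart_nonneg _) hw) hhlw
  have hval : ∀ k, G (x (φ k)) = g (y k) := by
    intro k
    set p := (x (φ k))⁺ with hpdef
    set q := (x (φ k))⁻ with hqdef
    have hpy : p ≤ y k := by
      show p ≤ |x (φ k)|
      rw [← posPart_add_negPart (x (φ k))]
      exact le_add_of_nonneg_right (negPart_nonneg _)
    have hqy : q ≤ y k := by
      show q ≤ |x (φ k)|
      rw [← posPart_add_negPart (x (φ k))]
      exact le_add_of_nonneg_left (posPart_nonneg _)
    have hAp : Aφ p = h k p := by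
      rw [hAdef, ConeFun.tsumCone_eq_single α g hαle p k
        (fun l hl => (hforeign k l hl (posPart_nonneg _) hpy).1)]
      exact (h k).restrict_self_apply (posPart_nonneg _)
    have hAq : Aφ q = 0 := by
      rw [hAdef, ConeFun.tsumCone_eq_single α g hαle q k
        (fun l hl => (hforeign k l hl (negPart_nonneg _) hqy).1)]
      refine (h k).restrict_eq_zero (posPart_nonneg _) (negPart_nonneg _) ?_
      rw [inf_comm]
      exact posPart_inf_negPart_eq_zero (x (φ k))
    have hBp : Bφ p = 0 := by
      rw [hBdef, ConeFun.tsumCone_eq_single β g hβle p k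
        (fun l hl => (hforeign k l hl (posPart_nonneg _) hpy).2)]
      exact (h k).restrict_eq_zero (negPart_nonneg _) (posPart_nonneg _)
        (posPart_inf_negPart_eq_zero (x (φ k)))
    have hBq : Bφ q = h k q := by
      rw [hBdef, ConeFun.tsumCone_eq_single β g hβle q k
        (fun l hl => (hforeign k l hl (negPart_nonneg _) hqy).2)]
      exact (h k).restrict_self_apply (negPart_nonneg _)
    have hsum : h k p + h k q = g (y k) := by
      rw [← (h k).add' (posPart_nonneg _) (negPart_nonneg _)]
      have hpq : p + q = y k := by
        show (x (φ k))⁺ + (x (φ k))⁻ = |x (φ k)|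
        exact posPart_add_negPart _
      rw [hpq]
      exact g.restrict_self_apply (hy k)
    have hGA : Aφ.toCLM C hC0 hAC (x (φ k)) = h k p := by
      rw [ConeFun.toCLM_apply, ← hpdef, ← hqdef, hAp, hAq, sub_zero]
    have hGB : Bφ.toCLM C hC0 hBC (x (φ k)) = - h k q := by
      rw [ConeFun.toCLM_apply, ← hpdef, ← hqdef, hBp, hBq, zero_sub]
    rw [hGdef]
    simp only [ContinuousLinearMap.coe_sub', Pi.sub_apply]
    rw [hGA, hGB]
    linarith [hsum]
  have htendG : Tendsto (fun k => G (x (φ k))) atTop (𝓝 0) :=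
    (hweak G).comp hφ.tendsto_atTop
  rw [show (fun k => G (x (φ k))) = fun k => g (y k) from funext hval] at htendG
  have hev : ∀ᶠ k in atTop, g (y k) < ε :=
    htendG.eventually (eventually_lt_nhds hε)
  obtain ⟨k, hk⟩ := hev.exists
  exact absurd (hφε k) (not_le.2 hk)

lemma abs_weaklyNull (x : ℕ → E) (hdisj : DisjointSeq x) (hweak : WeaklyNull x) :
    WeaklyNull fun n => |x n| := by
  intro f
  have h1 := coreTendsto (posPartCone f) ‖f‖ (norm_nonneg f)
    (fun z hz => posPartCone_le_norm f hz) x hdisj hweak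
  have h2 := coreTendsto (posPartCone (-f)) ‖(-f)‖ (norm_nonneg (-f))
    (fun z hz => posPartCone_le_norm (-f) hz) x hdisj hweak
  have hup : ∀ n, f |x n| ≤ posPartCone f |x n| :=
    fun n => le_posPartCone f (abs_nonneg _)
  have hlo : ∀ n, -(posPartCone (-f) |x n|) ≤ f |x n| := by
    intro n
    have := le_posPartCone (-f) (abs_nonneg (x n))
    simp only [ContinuousLinearMap.neg_apply] at this
    linarith
  have h2' : Tendsto (fun n => -(posPartCone (-f) |x n|)) atTop (𝓝 0) := by
    simpa using h2.neg
  exact tendsto_of_tendsto_of_tendsto_of_le_of_le h2' h1 hlo hup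

end Core

section Bounded
variable {E : Type*} [NormedAddCommGroup E] [NormedSpace ℝ E]

lemma weaklyNull_bounded (x : ℕ → E) (hweak : WeaklyNull x) : ∃ C, ∀ n, ‖x n‖ ≤ C := by
  set g : ℕ → StrongDual ℝ E →L[ℝ] ℝ :=
    fun n => NormedSpace.inclusionInDoubleDual ℝ E (x n) with hgdef
  have hpt : ∀ f : StrongDual ℝ E, ∃ C, ∀ n, ‖g n f‖ ≤ C := by
    intro f
    obtain ⟨C, hC⟩ := (hweak f).norm.bddAbove_range
    refine ⟨C, fun n => ?_⟩
    have : ‖f (x n)‖ ≤ C := hC ⟨n, rfl⟩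
    simpa [hgdef] using this
  obtain ⟨C', hC'⟩ := banach_steinhaus hpt
  refine ⟨C', fun n => ?_⟩
  have hnorm : ‖g n‖ = ‖x n‖ :=
    (NormedSpace.inclusionInDoubleDualLi ℝ (E := E)).norm_map (x n)
  rw [← hnorm]
  exact hC' n

end Bounded

/-- If some `E j` has the positive Schur property, then every continuous `m`-linear operator
`A : E 1 × ⋯ × E m → G` is almost Dunford–Pettis. -/
theorem almostDunfordPettis_of_positiveSchurProperty
    {m : ℕ} {E : Fin m → Type*} [∀ i, NormedAddCommGroup (E i)] [∀ i, Lattice (E i)]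
    [∀ i, HasSolidNorm (E i)] [∀ i, IsOrderedAddMonoid (E i)]
    [∀ i, NormedSpace ℝ (E i)] [∀ i, CompleteSpace (E i)]
    {G : Type*} [NormedAddCommGroup G] [NormedSpace ℝ G] [CompleteSpace G]
    (j : Fin m) (hj : PositiveSchurProperty (E j))
    (A : ContinuousMultilinearMap ℝ E G)
    (x : ∀ i, ℕ → E i) (hdisj : ∀ i, DisjointSeq (x i)) (hweak : ∀ i, WeaklyNull (x i)) :
    Tendsto (fun n => ‖A (fun i => x i n)‖) atTop (𝓝 0) := by
  have hynull : Tendsto (fun n => ‖x j n‖) atTop (𝓝 0) := by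
    have h1 := hj (fun n => |x j n|) (fun n => abs_nonneg _)
      (abs_weaklyNull (x j) (hdisj j) (hweak j))
    simpa [norm_abs_eq_norm] using h1
  choose C hC using fun i => weaklyNull_bounded (x i) (hweak i)
  have hCnn : ∀ i, 0 ≤ C i := fun i => le_trans (norm_nonneg _) (hC i 0)
  set K := ‖A‖ * ∏ i ∈ Finset.univ.erase j, C i with hKdef
  have hbound : ∀ n, ‖A (fun i => x i n)‖ ≤ K * ‖x j n‖ := by
    intro n
    have h1 : ‖A (fun i => x i n)‖ ≤ ‖A‖ * ∏ i, ‖x i n‖ := A.le_opNorm _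
    have h2 : (∏ i, ‖x i n‖) = (∏ i ∈ Finset.univ.erase j, ‖x i n‖) * ‖x j n‖ :=
      (Finset.prod_erase_mul _ _ (Finset.mem_univ j)).symm
    have h3 : (∏ i ∈ Finset.univ.erase j, ‖x i n‖) ≤ ∏ i ∈ Finset.univ.erase j, C i :=
      Finset.prod_le_prod (fun i _ => norm_nonneg _) (fun i _ => hC i n)
    calc ‖A (fun i => x i n)‖ ≤ ‖A‖ * ((∏ i ∈ Finset.univ.erase j, ‖x i n‖) * ‖x j n‖) := by
          rw [← h2]; exact h1
      _ ≤ ‖A‖ * ((∏ i ∈ Finset.univ.erase j, C i) * ‖x j n‖) := by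
          refine mul_le_mul_of_nonneg_left ?_ (norm_nonneg A)
          exact mul_le_mul_of_nonneg_right h3 (norm_nonneg _)
      _ = K * ‖x j n‖ := by rw [hKdef]; ring
  refine squeeze_zero (fun n => norm_nonneg _) hbound ?_
  simpa using hynull.const_mul K
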